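/- Let a > 0, b > 0, C ≥ 0 with 4b > a², and suppose |f(t, v + x*) − b·x*| ≤ C·|v| for all t and v. If C < a·√(4b − a²)/4, then the equilibrium x* of the controlled equation ẍ(t) + a·ẋ(t) + b·x(t) = f(t, x(g(t))) is globally asymptotically stable: every twice differentiable solution x satisfies x(t) → x* as t → ∞. -/

import Mathlib

open Filter MeasureTheory
open Set Topology

lemma decr_aux (V Vd : ℝ → ℝ) (hV : ∀ t, HasDerivAt V (Vd t) t) (c : ℝ)
    {t₂ t₃ : ℝ} (h23 : t₂ ≤ t₃)
    (hd : ∀ s, t₂ < s → s < t₃ → Vd s ≤ -c) :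
    V t₃ + c * (t₃ - t₂) ≤ V t₂ := by
  have hh : ∀ s, HasDerivAt (fun u => V u + c * u) (Vd s + c) s := fun s =>
    (hV s).add (by simpa using (hasDerivAt_id s).const_mul c)
  have hanti : AntitoneOn (fun u => V u + c * u) (Set.Icc t₂ t₃) := by
    refine antitoneOn_of_deriv_nonpos (convex_Icc _ _)
      (fun s _ => ((hh s).continuousAt).continuousWithinAt)
      (fun s hs => ((hh s).differentiableAt).differentiableWithinAt) ?_
    intro s hs
    rw [interior_Icc] at hs
    rw [(hh s).deriv]
    linarith [hd s hs.1 hs.2]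
  have := hanti (Set.left_mem_Icc.2 h23) (Set.right_mem_Icc.2 h23) h23
  simp only at this
  linarith

lemma lemA_aux (V Vd : ℝ → ℝ) (hV : ∀ t, HasDerivAt V (Vd t) t)
    (T R c : ℝ) (hc : 0 < c)
    (H : ∀ t, T ≤ t → R ≤ V t → Vd t ≤ -c) :
    ∀ᶠ t in atTop, V t ≤ R := by
  have hVc : Continuous V := continuous_iff_continuousAt.2 fun s => (hV s).continuousAt
  have part1 : ∃ t₁, T ≤ t₁ ∧ V t₁ ≤ R := by
    by_contra h
    push_neg at h
    have hTR : R < V T := h T le_rfl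
    have hpos : 0 < (V T - R) / c := div_pos (by linarith) hc
    have h3 : T ≤ T + (V T - R) / c + 1 := by linarith
    have hdec := decr_aux V Vd hV c h3
      (fun s hs1 hs2 => H s (by linarith) (h s (by linarith)).le)
    have hVt₃ := h _ h3
    have hc' : c * (T + (V T - R) / c + 1 - T) = V T - R + c := by
      field_simp
      ring
    linarith
  obtain ⟨t₁, ht₁T, ht₁⟩ := part1
  rw [eventually_atTop]
  refine ⟨t₁, fun t₃ h13 => ?_⟩
  by_contra hV3
  push_neg at hV3
  set S := Set.Icc t₁ t₃ ∩ {s | V s ≤ R} with hS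
  have hSne : S.Nonempty := ⟨t₁, ⟨le_rfl, h13⟩, ht₁⟩
  have hSc : IsClosed S := isClosed_Icc.inter (isClosed_le hVc continuous_const)
  have hSbd : BddAbove S := ⟨t₃, fun s hs => hs.1.2⟩
  have ht₂ := hSc.csSup_mem hSne hSbd
  set t₂ := sSup S with ht₂def
  obtain ⟨⟨h12, h23⟩, hVt₂⟩ := ht₂
  simp only [Set.mem_setOf_eq] at hVt₂
  have hmid : ∀ s, t₂ < s → s < t₃ → R ≤ V s := by
    intro s hs1 hs2
    by_contra h'
    push_neg at h'
    have hsS : s ∈ S := ⟨⟨by linarith, by linarith⟩, h'.le⟩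
    exact absurd (le_csSup hSbd hsS) (not_le.2 hs1)
  have hdec := decr_aux V Vd hV c h23
    (fun s hs1 hs2 => H s (by linarith) (hmid s hs1 hs2))
  nlinarith [mul_nonneg hc.le (sub_nonneg.2 h23)]

lemma lemB_aux (V Vd : ℝ → ℝ) (hV : ∀ t, HasDerivAt V (Vd t) t)
    (T B : ℝ) (hpast : ∀ s, s ≤ T → V s < B)
    (H : ∀ t, T < t → (∀ s, s ≤ t → V s ≤ B) → V t = B → Vd t < 0) :
    ∀ t, V t ≤ B := by
  by_contra h
  push_neg at h
  obtain ⟨t', ht'⟩ := h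
  have hVc : Continuous V := continuous_iff_continuousAt.2 fun s => (hV s).continuousAt
  set S := {s : ℝ | B ≤ V s} with hS
  have hSne : S.Nonempty := ⟨t', ht'.le⟩
  have hSc : IsClosed S := isClosed_le continuous_const hVc
  have hSbd : BddBelow S :=
    ⟨T, fun s hs => le_of_not_gt fun hsT => (hpast s hsT.le).not_ge hs⟩
  have ht₁S : sInf S ∈ S := hSc.csInf_mem hSne hSbd
  set t₁ := sInf S with ht₁def
  simp only [hS, Set.mem_setOf_eq] at ht₁S
  have ht₁geT : T ≤ t₁ := le_csInf hSne fun s hs =>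
    le_of_not_gt fun hsT => (hpast s hsT.le).not_ge hs
  have ht₁T : T < t₁ := lt_of_le_of_ne ht₁geT (by
    intro hEq
    exact absurd ht₁S (not_le.2 (hEq ▸ hpast T le_rfl)))
  have hlt : ∀ s, s < t₁ → V s < B := by
    intro s hs
    rcases le_or_gt s T with h1 | h1
    · exact hpast s h1
    · by_contra h2
      push_neg at h2
      exact absurd (csInf_le hSbd h2) (not_le.2 hs)
  have hle : V t₁ ≤ B := by
    have htend : Tendsto V (𝓝[<] t₁) (𝓝 (V t₁)) :=
      (hVc.continuousAt).continuousWithinAt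
    refine le_of_tendsto htend ?_
    filter_upwards [self_mem_nhdsWithin] with s hs
    exact (hlt s hs).le
  have hVt₁ : V t₁ = B := le_antisymm hle ht₁S
  have hist : ∀ s, s ≤ t₁ → V s ≤ B := fun s hs =>
    hs.lt_or_eq.elim (fun h' => (hlt s h').le) (fun h' => h' ▸ hVt₁.le)
  have hneg := H t₁ ht₁T hist hVt₁
  have hslope : Tendsto (slope V t₁) (𝓝[<] t₁) (𝓝 (Vd t₁)) :=
    (hasDerivAt_iff_tendsto_slope.1 (hV t₁)).mono_left
      (nhdsWithin_mono _ fun s hs => ne_of_lt hs)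
  have hev : ∀ᶠ s in 𝓝[<] t₁, slope V t₁ s < 0 := hslope.eventually_lt_const hneg
  obtain ⟨s, hs1, hs2⟩ := (hev.and self_mem_nhdsWithin).exists
  rw [slope_def_field] at hs1
  have hden : s - t₁ < 0 := by simpa [sub_neg] using hs2
  rcases div_neg_iff.1 hs1 with ⟨h1, h2⟩ | ⟨h1, h2⟩
  · linarith [hlt s hs2, hVt₁]
  · linarith


set_option maxHeartbeats 1000000 in
/-- Theorem 3, part c): if 4b > a² and C < a√(4b − a²)/4, the equilibrium x* of
ẍ(t) + a·ẋ(t) + b·x(t) = f(t, x(g(t))) is globally asymptotically stable. -/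
theorem proportional_delayed_control_stability_case_c
    (t₀ a b C xs : ℝ)
    (f : ℝ → ℝ → ℝ) (g : ℝ → ℝ)
    (hgmeas : Measurable g) (hgle : ∀ t, g t ≤ t) (hgtend : Tendsto g atTop atTop)
    (ha : 0 < a) (hb : 0 < b) (hC : 0 ≤ C) (h4b : 4 * b > a ^ 2)
    (hfbound : ∀ t v, |f t (v + xs) - b * xs| ≤ C * |v|)
    (hcond : C < a * Real.sqrt (4 * b - a ^ 2) / 4)
    (x x' x'' : ℝ → ℝ)
    (hx' : ∀ t, HasDerivAt x (x' t) t) (hx'' : ∀ t, HasDerivAt x' (x'' t) t)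
    (hinit : ∃ M : ℝ, ∀ t ≤ t₀, |x t| ≤ M ∧ |x' t| ≤ M)
    (heq : ∀ t ≥ t₀, x'' t + a * x' t + b * x t = f t (x (g t))) :
    Tendsto x atTop (nhds xs) := by
  set ν2 : ℝ := b - a ^ 2 / 4 with hν2
  set ν : ℝ := Real.sqrt ν2 with hν
  set q : ℝ := 2 * C / (a * ν) with hq
  set y : ℝ → ℝ := fun t => x t - xs with hy
  set p : ℝ → ℝ := fun t => x' t + a / 2 * y t with hp
  set V : ℝ → ℝ := fun t => p t ^ 2 + ν2 * y t ^ 2 with hV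
  set Vd : ℝ → ℝ := fun t => 2 * p t * (x'' t + a / 2 * x' t) + 2 * ν2 * y t * x' t with hVd
  clear_value Vd V p y q ν ν2
  have hν2pos : 0 < ν2 := by rw [hν2]; nlinarith
  have hνpos : 0 < ν := by rw [hν]; exact Real.sqrt_pos.2 hν2pos
  have hνsq : ν ^ 2 = ν2 := by rw [hν]; exact Real.sq_sqrt hν2pos.le
  have hq0 : 0 ≤ q := by
    rw [hq]; exact div_nonneg (by linarith) (mul_pos ha hνpos).le
  have hq1 : q < 1 := by
    have h1 : Real.sqrt (4 * b - a ^ 2) = 2 * ν := by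
      rw [hν, show 4 * b - a ^ 2 = 4 * ν2 by rw [hν2]; ring,
        show (4 : ℝ) * ν2 = 2 ^ 2 * ν2 by ring, Real.sqrt_mul (by norm_num),
        Real.sqrt_sq (by norm_num)]
    rw [h1] at hcond
    rw [hq, div_lt_one (mul_pos ha hνpos)]
    linarith
  have hyd : ∀ t, HasDerivAt y (x' t) t := by
    intro t; rw [hy]; exact (hx' t).sub_const xs
  have hpd : ∀ t, HasDerivAt p (x'' t + a / 2 * x' t) t := by
    intro t; rw [hp]; exact (hx'' t).add ((hyd t).const_mul (a / 2))
  have hVd' : ∀ t, HasDerivAt V (Vd t) t := by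
    intro t
    rw [hV]
    have h1 := ((hpd t).pow 2).add (((hyd t).pow 2).const_mul ν2)
    exact h1.congr_deriv (by simp only [hVd]; norm_num; ring)
  have hV0 : ∀ t, 0 ≤ V t := by
    intro t
    simp only [hV]
    nlinarith [sq_nonneg (p t), sq_nonneg (y t), mul_nonneg hν2pos.le (sq_nonneg (y t))]
  have hsqV : ∀ t, Real.sqrt (V t) ^ 2 = V t := fun t => Real.sq_sqrt (hV0 t)
  have hpb : ∀ t, |p t| ≤ Real.sqrt (V t) := by
    intro t
    rw [← Real.sqrt_sq_eq_abs]
    apply Real.sqrt_le_sqrt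
    simp only [hV]
    nlinarith [mul_nonneg hν2pos.le (sq_nonneg (y t))]
  have hyb : ∀ t, ν * |y t| ≤ Real.sqrt (V t) := by
    intro t
    rw [show ν * |y t| = Real.sqrt (ν2 * y t ^ 2) by
      rw [Real.sqrt_mul hν2pos.le, Real.sqrt_sq_eq_abs, hν]]
    apply Real.sqrt_le_sqrt
    simp only [hV]
    nlinarith [sq_nonneg (p t)]
  -- key differential inequality
  have hkey : ∀ t, t₀ ≤ t →
      Vd t ≤ a * Real.sqrt (V t) * (q * Real.sqrt (V (g t)) - Real.sqrt (V t)) := by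
    intro t ht
    have hxx : x'' t = f t (x (g t)) - a * x' t - b * x t := by linarith [heq t ht]
    have hVdeq : Vd t = -a * V t + 2 * p t * (f t (x (g t)) - b * xs) := by
      simp only [hVd, hV, hp, hy, hν2]
      linear_combination (2 * (x' t + a / 2 * (x t - xs))) * hxx
    have hF : |f t (x (g t)) - b * xs| ≤ C * |x (g t) - xs| := by
      have h2 := hfbound t (x (g t) - xs)
      rwa [sub_add_cancel] at h2
    have hyg : C * |x (g t) - xs| ≤ C / ν * Real.sqrt (V (g t)) := by
      have h3 := hyb (g t)
      simp only [hy] at h3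
      rw [div_mul_eq_mul_div, le_div_iff₀ hνpos]
      calc C * |x (g t) - xs| * ν = C * (ν * |x (g t) - xs|) := by ring
        _ ≤ C * Real.sqrt (V (g t)) := mul_le_mul_of_nonneg_left h3 hC
    have hprod : 2 * p t * (f t (x (g t)) - b * xs) ≤
        2 * Real.sqrt (V t) * (C / ν * Real.sqrt (V (g t))) := by
      have h1 : p t * (f t (x (g t)) - b * xs) ≤ |p t| * |f t (x (g t)) - b * xs| :=
        (le_abs_self _).trans (le_of_eq (abs_mul _ _))
      have h2 : |p t| * |f t (x (g t)) - b * xs| ≤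
          Real.sqrt (V t) * (C / ν * Real.sqrt (V (g t))) :=
        mul_le_mul (hpb t) (hF.trans hyg) (abs_nonneg _) (Real.sqrt_nonneg _)
      calc 2 * p t * (f t (x (g t)) - b * xs)
          = 2 * (p t * (f t (x (g t)) - b * xs)) := by ring
        _ ≤ 2 * (|p t| * |f t (x (g t)) - b * xs|) := by linarith
        _ ≤ 2 * (Real.sqrt (V t) * (C / ν * Real.sqrt (V (g t)))) := by linarith
        _ = 2 * Real.sqrt (V t) * (C / ν * Real.sqrt (V (g t))) := by ring
    have hfinal : -a * V t + 2 * Real.sqrt (V t) * (C / ν * Real.sqrt (V (g t)))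
        = a * Real.sqrt (V t) * (q * Real.sqrt (V (g t)) - Real.sqrt (V t)) := by
      have haq : a * q = 2 * C / ν := by
        rw [hq]
        field_simp
      have hexp : a * Real.sqrt (V t) * (q * Real.sqrt (V (g t)) - Real.sqrt (V t))
          = (a * q) * Real.sqrt (V t) * Real.sqrt (V (g t)) - a * Real.sqrt (V t) ^ 2 := by
        ring
      rw [hexp, haq, hsqV t]
      field_simp
      ring
    rw [hVdeq, ← hfinal]
    linarith [hprod]
  -- boundedness
  obtain ⟨M, hM⟩ := hinit
  set B₀ : ℝ := (M + a / 2 * (M + |xs|)) ^ 2 + ν2 * (M + |xs|) ^ 2 + 1 with hB₀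
  clear_value B₀
  have hM0 : 0 ≤ M := (abs_nonneg _).trans (hM t₀ le_rfl).1
  have hB₀pos : 0 < B₀ := by
    rw [hB₀]
    nlinarith [sq_nonneg (M + a / 2 * (M + |xs|)),
      mul_nonneg hν2pos.le (sq_nonneg (M + |xs|))]
  have hpast : ∀ s, s ≤ t₀ → V s < B₀ := by
    intro s hs
    obtain ⟨h1, h2⟩ := hM s hs
    have hy1 : |y s| ≤ M + |xs| := by
      simp only [hy]
      calc |x s - xs| ≤ |x s| + |xs| := abs_sub _ _
        _ ≤ M + |xs| := by linarith
    have hp1 : |p s| ≤ M + a / 2 * (M + |xs|) := by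
      simp only [hp]
      calc |x' s + a / 2 * y s| ≤ |x' s| + |a / 2 * y s| := abs_add_le _ _
        _ = |x' s| + a / 2 * |y s| := by
            rw [abs_mul, abs_of_nonneg (by linarith : (0:ℝ) ≤ a / 2)]
        _ ≤ M + a / 2 * (M + |xs|) := by
            have := mul_le_mul_of_nonneg_left hy1 (by linarith : (0:ℝ) ≤ a / 2)
            linarith
    have hy2 : y s ^ 2 ≤ (M + |xs|) ^ 2 :=
      sq_le_sq' (abs_le.1 hy1).1 (abs_le.1 hy1).2
    have hp2 : p s ^ 2 ≤ (M + a / 2 * (M + |xs|)) ^ 2 :=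
      sq_le_sq' (abs_le.1 hp1).1 (abs_le.1 hp1).2
    have hVs : V s = p s ^ 2 + ν2 * y s ^ 2 := by simp only [hV]
    rw [hVs, hB₀]
    have := mul_le_mul_of_nonneg_left hy2 hν2pos.le
    linarith
  have hbound : ∀ t, V t ≤ B₀ := by
    apply lemB_aux V Vd hVd' t₀ B₀ hpast
    intro t htT hist hVt
    have h1 := hkey t htT.le
    have h2 : Real.sqrt (V (g t)) ≤ Real.sqrt B₀ := Real.sqrt_le_sqrt (hist _ (hgle t))
    have h3 : Real.sqrt (V t) = Real.sqrt B₀ := by rw [hVt]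
    have h4 : Real.sqrt B₀ ^ 2 = B₀ := Real.sq_sqrt hB₀pos.le
    have h5 : 0 < Real.sqrt B₀ := Real.sqrt_pos.2 hB₀pos
    have h6 : a * Real.sqrt (V t) * (q * Real.sqrt (V (g t)) - Real.sqrt (V t)) ≤
        a * B₀ * (q - 1) := by
      rw [h3]
      have e : a * Real.sqrt B₀ * (q * Real.sqrt B₀ - Real.sqrt B₀) = a * B₀ * (q - 1) := by
        linear_combination (a * (q - 1)) * h4
      rw [← e]
      have h7' := mul_le_mul_of_nonneg_left h2
        (mul_nonneg (mul_nonneg ha.le h5.le) hq0)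
      nlinarith [h7']
    have h7 : a * B₀ * (q - 1) < 0 := by nlinarith [mul_pos ha hB₀pos]
    linarith
  -- the set of eventual bounds
  have hB₀P : (0:ℝ) ≤ B₀ ∧ ∀ᶠ t in atTop, V t ≤ B₀ := ⟨hB₀pos.le, Eventually.of_forall hbound⟩
  set P : Set ℝ := {B : ℝ | 0 ≤ B ∧ ∀ᶠ t in atTop, V t ≤ B} with hPdef
  have hPne : P.Nonempty := ⟨B₀, hB₀P⟩
  have hPbdd : BddBelow P := ⟨0, fun B hB => hB.1⟩
  have hstep : ∀ B ∈ P, ∀ ε : ℝ, 0 < ε → q ^ 2 * B + ε ∈ P := by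
    rintro B ⟨hB0, hBev⟩ ε hε
    obtain ⟨T, hT⟩ := eventually_atTop.1 hBev
    obtain ⟨T', hT'⟩ := eventually_atTop.1
      ((hgtend.eventually (eventually_ge_atTop T)).and (eventually_ge_atTop t₀))
    have hR0 : 0 < q ^ 2 * B + ε := by
      have := mul_nonneg (sq_nonneg q) hB0
      linarith
    have hqB : q * Real.sqrt B < Real.sqrt (q ^ 2 * B + ε) := by
      have h1 : Real.sqrt (q ^ 2 * B) < Real.sqrt (q ^ 2 * B + ε) :=
        Real.sqrt_lt_sqrt (mul_nonneg (sq_nonneg q) hB0) (by linarith)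
      have h2 : Real.sqrt (q ^ 2 * B) = q * Real.sqrt B := by
        rw [Real.sqrt_mul (sq_nonneg q), Real.sqrt_sq hq0]
      linarith
    set R : ℝ := q ^ 2 * B + ε with hRdef
    set c : ℝ := a * Real.sqrt R * (Real.sqrt R - q * Real.sqrt B) with hcdef
    have hcpos : 0 < c := by
      rw [hcdef]
      apply mul_pos (mul_pos ha (Real.sqrt_pos.2 hR0))
      linarith
    refine ⟨hR0.le, ?_⟩
    refine lemA_aux V Vd hVd' T' R c hcpos ?_
    intro t ht hRV
    obtain ⟨hg1, hg2⟩ := hT' t ht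
    have h1 := hkey t hg2
    have h2 : Real.sqrt (V (g t)) ≤ Real.sqrt B := Real.sqrt_le_sqrt (hT _ hg1)
    have h3 : Real.sqrt R ≤ Real.sqrt (V t) := Real.sqrt_le_sqrt hRV
    have h5 : 0 ≤ Real.sqrt R := Real.sqrt_nonneg R
    have e1 : Real.sqrt R - q * Real.sqrt B ≤ Real.sqrt (V t) - q * Real.sqrt (V (g t)) := by
      linarith [mul_le_mul_of_nonneg_left h2 hq0]
    have e2 : 0 < Real.sqrt R - q * Real.sqrt B := by linarith
    have hmono : c ≤ a * Real.sqrt (V t) * (Real.sqrt (V t) - q * Real.sqrt (V (g t))) := by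
      rw [hcdef]
      have h6 := mul_le_mul (mul_le_mul_of_nonneg_left h3 ha.le) e1 e2.le
        (mul_nonneg ha.le (Real.sqrt_nonneg (V t)))
      calc a * Real.sqrt R * (Real.sqrt R - q * Real.sqrt B)
          = a * Real.sqrt R * (Real.sqrt R - q * Real.sqrt B) := rfl
        _ ≤ a * Real.sqrt (V t) * (Real.sqrt (V t) - q * Real.sqrt (V (g t))) := h6
    have e3 : a * Real.sqrt (V t) * (q * Real.sqrt (V (g t)) - Real.sqrt (V t))
        = -(a * Real.sqrt (V t) * (Real.sqrt (V t) - q * Real.sqrt (V (g t)))) := by ring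
    rw [e3] at h1
    linarith
  set L : ℝ := sInf P with hLdef
  have hL0 : 0 ≤ L := le_csInf hPne fun B hB => hB.1
  have hLε : ∀ ε : ℝ, 0 < ε → L ≤ q ^ 2 * (L + ε) + ε := by
    intro ε hε
    obtain ⟨B, hBP, hBlt⟩ := (csInf_lt_iff hPbdd hPne).1 (lt_add_of_pos_right L hε)
    have h1 := csInf_le hPbdd (hstep B hBP ε hε)
    rw [← hLdef] at h1
    linarith [mul_le_mul_of_nonneg_left hBlt.le (sq_nonneg q)]
  have hq2 : q ^ 2 < 1 := by nlinarith
  have hL : L = 0 := by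
    by_contra hL'
    have hLpos : 0 < L := lt_of_le_of_ne hL0 (Ne.symm hL')
    set ε : ℝ := L * (1 - q ^ 2) / (2 * (q ^ 2 + 1)) with hεdef
    have hεpos : 0 < ε := by
      rw [hεdef]
      apply div_pos (mul_pos hLpos (by linarith))
      positivity
    have h1 := hLε ε hεpos
    have h2 : (q ^ 2 + 1) * ε = L * (1 - q ^ 2) / 2 := by
      rw [hεdef]
      field_simp
    nlinarith [mul_pos hLpos (show (0:ℝ) < 1 - q ^ 2 by linarith)]
  have htendV : Tendsto V atTop (𝓝 0) := by
    rw [tendsto_order]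
    constructor
    · intro b' hb'
      exact Eventually.of_forall fun t => lt_of_lt_of_le hb' (hV0 t)
    · intro b' hb'
      have hlt : sInf P < b' := by rw [← hLdef, hL]; exact hb'
      obtain ⟨B, hBP, hBlt⟩ := (csInf_lt_iff hPbdd hPne).1 hlt
      exact hBP.2.mono fun t ht => lt_of_le_of_lt ht hBlt
  have htendy2 : Tendsto (fun t => y t ^ 2) atTop (𝓝 0) := by
    have h1 : Tendsto (fun t => ν2 * y t ^ 2) atTop (𝓝 0) := by
      apply squeeze_zero (fun t => mul_nonneg hν2pos.le (sq_nonneg _)) (fun t => ?_) htendV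
      have hVt : V t = p t ^ 2 + ν2 * y t ^ 2 := by simp only [hV]
      rw [hVt]
      linarith [sq_nonneg (p t)]
    have h2 := h1.const_mul ν2⁻¹
    simp only [← mul_assoc, inv_mul_cancel₀ hν2pos.ne', one_mul, mul_zero] at h2
    exact h2
  have htendabs : Tendsto (fun t => |y t|) atTop (𝓝 0) := by
    have h3 := (Real.continuous_sqrt.tendsto 0).comp htendy2
    simpa [Function.comp_def, Real.sqrt_sq_eq_abs, Real.sqrt_zero] using h3
  have htendy : Tendsto y atTop (𝓝 0) := by
    apply squeeze_zero_norm _ htendabs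
    intro t
    simp [Real.norm_eq_abs]
  have hfin := htendy.add_const xs
  simp only [zero_add] at hfin
  have hxy : (fun t => y t + xs) = x := by
    funext t
    rw [hy]
    ring
  rwa [hxy] at hfin
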